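/- One has g(0) = 1 and g(β) → 1 − n as β → −∞; consequently there exists a unique β̄ ∈ (−∞, 0) such that g(β̄) = 0, and g(β) < 0 for β < β̄ while g(β) > 0 for β̄ < β < μ_1. -/

import Mathlib

open Filter

/-- `g 0 = 1` and `g β → 1 - n` as `β → -∞`; consequently there is a unique
`β̄ < 0` with `g β̄ = 0`, and `g < 0` on `(-∞, β̄)` while `g > 0` on `(β̄, μ 0)`. -/
theorem stmt_1 (n : ℕ) (hn : 2 ≤ n) (μ : Fin n → ℝ) (hμpos : ∀ k, 0 < μ k)
    (hμmono : Monotone μ) (g : ℝ → ℝ)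
    (hg : ∀ β : ℝ, g β = 1 + β * ∑ k, 1 / (μ k - β)) :
    g 0 = 1 ∧
    Filter.Tendsto g Filter.atBot (nhds (1 - (n : ℝ))) ∧
    ∃! βbar : ℝ, βbar < 0 ∧ g βbar = 0 ∧
      (∀ β < βbar, g β < 0) ∧
      (∀ β : ℝ, βbar < β → β < μ ⟨0, by omega⟩ → 0 < g β) := by
  haveI : NeZero n := ⟨by omega⟩
  have hgfun : g = fun β => 1 + β * ∑ k, 1 / (μ k - β) := funext hg
  subst hgfun
  set μ0 := μ ⟨0, by omega⟩ with hμ0def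
  have hμ0 : 0 < μ0 := hμpos _
  have hle : ∀ k : Fin n, μ0 ≤ μ k := fun k => hμmono (by simp [Fin.le_def])
  have hpos : ∀ (k : Fin n) (β : ℝ), β < μ0 → 0 < μ k - β := fun k β hβ =>
    sub_pos.mpr (lt_of_lt_of_le hβ (hle k))
  -- rewrite g as a sum of fractions
  have hgsum : ∀ β : ℝ, (1 + β * ∑ k, 1 / (μ k - β)) = 1 + ∑ k, β / (μ k - β) := by
    intro β
    rw [Finset.mul_sum]
    simp [div_eq_mul_inv]
  -- g 0 = 1
  have hg0 : (fun β => 1 + β * ∑ k, 1 / (μ k - β)) 0 = 1 := by simp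
  -- strict monotonicity on Iio μ0
  have hsm : StrictMonoOn (fun β => 1 + β * ∑ k, 1 / (μ k - β)) (Set.Iio μ0) := by
    intro a ha b hb hab
    simp only [hgsum]
    have hterm : ∀ k : Fin n, a / (μ k - a) < b / (μ k - b) := by
      intro k
      rw [div_lt_div_iff₀ (hpos k a ha) (hpos k b hb)]
      nlinarith [mul_lt_mul_of_pos_right hab (hμpos k)]
    have := Finset.sum_lt_sum_of_nonempty (Finset.univ_nonempty (α := Fin n))
      (fun k _ => hterm k)
    linarith
  -- continuity on Iio μ0
  have hcont : ContinuousOn (fun β => 1 + β * ∑ k, 1 / (μ k - β)) (Set.Iio μ0) := by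
    apply ContinuousOn.add continuousOn_const
    apply ContinuousOn.mul continuousOn_id
    apply continuousOn_finset_sum
    intro k _
    exact ContinuousOn.div continuousOn_const
      ((continuousOn_const.sub continuousOn_id))
      (fun x hx => ne_of_gt (hpos k x hx))
  -- tendsto at -∞
  have htend : Tendsto (fun β => 1 + β * ∑ k, 1 / (μ k - β)) atBot (nhds (1 - (n : ℝ))) := by
    have hterm : ∀ k : Fin n, Tendsto (fun β : ℝ => β / (μ k - β)) atBot (nhds (-1)) := by
      intro k
      have hd : Tendsto (fun β : ℝ => μ k - β) atBot atTop := by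
        apply tendsto_atTop_add_const_left
        exact tendsto_neg_atBot_atTop
      have h1 : Tendsto (fun β : ℝ => -1 + μ k * (μ k - β)⁻¹) atBot (nhds (-1)) := by
        have := (tendsto_inv_atTop_zero.comp hd).const_mul (μ k)
        have h2 := this.const_add (-1 : ℝ)
        simpa using h2
      apply h1.congr'
      filter_upwards [eventually_lt_atBot (μ k)] with β hβ
      have hne : μ k - β ≠ 0 := ne_of_gt (sub_pos.mpr hβ)
      field_simp
      ring
    have hsum : Tendsto (fun β : ℝ => ∑ k, β / (μ k - β)) atBot
        (nhds (∑ _k : Fin n, (-1 : ℝ))) :=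
      tendsto_finset_sum _ (fun k _ => hterm k)
    have := hsum.const_add (1 : ℝ)
    have heq : (1 : ℝ) + ∑ _k : Fin n, (-1 : ℝ) = 1 - (n : ℝ) := by
      simp [Finset.sum_const, Finset.card_univ, sub_eq_add_neg]
    rw [heq] at this
    apply this.congr
    intro β
    rw [hgsum]
  -- existence of a point where g < 0
  have hneg : ∀ᶠ β in atBot, (1 + β * ∑ k, 1 / (μ k - β)) < 0 := by
    apply htend.eventually (gt_mem_nhds _)
    have : (2 : ℝ) ≤ (n : ℝ) := by exact_mod_cast hn
    linarith
  obtain ⟨B, hB1, hB2⟩ := (hneg.and (eventually_lt_atBot (0 : ℝ))).exists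
  -- IVT on [B, 0]
  have hsub : Set.Icc B (0 : ℝ) ⊆ Set.Iio μ0 := fun x hx =>
    lt_of_le_of_lt hx.2 hμ0
  have hivt := intermediate_value_Icc (le_of_lt hB2) (hcont.mono hsub)
  have h0mem : (0 : ℝ) ∈ Set.Icc ((fun β => 1 + β * ∑ k, 1 / (μ k - β)) B)
      ((fun β => 1 + β * ∑ k, 1 / (μ k - β)) 0) := by
    constructor
    · exact le_of_lt hB1
    · rw [hg0]; norm_num
  obtain ⟨βbar, hβbarmem, hβbarval⟩ := hivt h0mem
  have hβbarlt : βbar < 0 := by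
    rcases lt_or_eq_of_le hβbarmem.2 with h | h
    · exact h
    · exfalso; rw [h, hg0] at hβbarval; norm_num at hβbarval
  have hβbarIio : βbar ∈ Set.Iio μ0 := lt_trans hβbarlt hμ0
  refine ⟨hg0, htend, βbar, ⟨hβbarlt, hβbarval, ?_, ?_⟩, ?_⟩
  · intro β hβ
    have := hsm (lt_trans hβ hβbarIio) hβbarIio hβ
    rw [hβbarval] at this
    exact this
  · intro β h1 h2
    have := hsm hβbarIio h2 h1
    rw [hβbarval] at this
    exact this
  · rintro y ⟨hy0, hyval, hyneg, hypos⟩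
    rcases lt_trichotomy y βbar with h | h | h
    · have := hsm (lt_trans h hβbarIio) hβbarIio h
      rw [hβbarval, hyval] at this
      exact absurd this (lt_irrefl 0)
    · exact h
    · have := hsm hβbarIio (lt_trans hy0 hμ0) h
      rw [hβbarval, hyval] at this
      exact absurd this (lt_irrefl 0)
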